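/- Let G = (V,E) be a finite simple graph on N vertices with maximum degree Δ, let q ≥ 3, and let P be the Glauber dynamics for the Potts model on G with inverse temperature β ≥ 0. If Δ·tanh(β/N) < 1, then for all σ, τ ∈ [q]^V there exists a coupling (X₁^σ, X₁^τ) of the one-step distributions P(σ,·) and P(τ,·) such that E[d_H(X₁^σ, X₁^τ)] ≤ (1 − (1 − Δ·tanh(β/N))/N)·d_H(σ,τ); that is, P is contracting with respect to the Hamming distance with rate κ = 1 − (1 − Δ·tanh(β/N))/N. -/

import Mathlib

noncomputable section
attribute [local instance] Classical.propDecidable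

open Finset

variable {V : Type*}

/-- `γ` is a coupling of `μ₁` and `μ₂`. -/
def IsCoupling {Ω : Type*} [Fintype Ω] (γ : Ω × Ω → ℝ) (μ₁ μ₂ : Ω → ℝ) : Prop :=
  (∀ p, 0 ≤ γ p) ∧ (∀ a, ∑ b, γ (a, b) = μ₁ a) ∧ (∀ b, ∑ a, γ (a, b) = μ₂ b)

/-- The Hamming distance between two configurations (as a real number). -/
def hamming [Fintype V] {q : ℕ} (σ τ : V → Fin q) : ℝ :=
  ((Finset.univ.filter fun v => σ v ≠ τ v).card : ℝ)

/-- The Potts Hamiltonian: `H(σ) = -(1/N) ∑_{(u,v) ordered, {u,v} ∈ E} 1{σ(u)=σ(v)}`. -/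
def pottsH [Fintype V] {q : ℕ} (G : SimpleGraph V) (σ : V → Fin q) : ℝ :=
  -(Fintype.card V : ℝ)⁻¹ *
    ∑ u : V, ∑ v : V, if G.Adj u v ∧ σ u = σ v then 1 else 0

/-- The Potts Gibbs measure at inverse temperature `β`. -/
def pottsGibbs [Fintype V] (q : ℕ) (G : SimpleGraph V) (β : ℝ) (σ : V → Fin q) : ℝ :=
  Real.exp (-β * pottsH G σ) / ∑ τ : V → Fin q, Real.exp (-β * pottsH G τ)

/-- The conditional spin distribution `μ_v(k | σ)`. -/
def condSpin [Fintype V] {q : ℕ} (μ : (V → Fin q) → ℝ) (v : V)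
    (σ : V → Fin q) (k : Fin q) : ℝ :=
  μ (Function.update σ v k) / ∑ k' : Fin q, μ (Function.update σ v k')

/-- The Glauber dynamics transition matrix for the measure `μ` on `[q]^V`. -/
def glauber [Fintype V] {q : ℕ} (μ : (V → Fin q) → ℝ) (σ τ : V → Fin q) : ℝ :=
  (Fintype.card V : ℝ)⁻¹ *
    ∑ v : V, if ∀ w, w ≠ v → τ w = σ w then condSpin μ v σ (τ v) else 0



lemma core1 (A C R t : ℝ) (hA : 0 < A) (hC : 0 < C) (hR : 0 ≤ R) (ht : 1 ≤ t) :
    2*(A+C+R)*(A + C*t^2 + R*t) ≤ (t+1)*(A*(A+C+R) + C*(A + C*t^2 + R*t) + R*(A + C*t^2 + R*t)) := by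
  nlinarith [mul_nonneg (sub_nonneg.2 ht) (sq_nonneg (A - C*t)),
    mul_nonneg (mul_nonneg (sub_nonneg.2 ht) (sq_nonneg R)) (le_trans zero_le_one ht),
    mul_nonneg (mul_nonneg (mul_nonneg (sub_nonneg.2 ht) hC.le) hR) (by nlinarith : (0:ℝ) ≤ t*(t+1))]

lemma core2 (A C R t : ℝ) (hA : 0 < A) (hC : 0 < C) (hR : 0 ≤ R) (ht : 1 ≤ t) :
    2*(A+C+R)*(A + C*t^2 + R*t) ≤ (t+1)*(A*(A+C+R) + C*(A + C*t^2 + R*t) + R*t*(A+C+R)) := by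
  nlinarith [mul_nonneg (sub_nonneg.2 ht) (sq_nonneg (A - C*t)),
    mul_nonneg (mul_nonneg (sub_nonneg.2 ht) (sq_nonneg R)) (le_trans zero_le_one ht),
    mul_nonneg (mul_nonneg (mul_nonneg (sub_nonneg.2 ht) hA.le) hR) (by linarith : (0:ℝ) ≤ t+1)]

lemma minsum {q : ℕ} (a c : Fin q) (hac : a ≠ c) (t : ℝ) (ht : 1 ≤ t)
    (w w' : Fin q → ℝ) (hw : ∀ k, 0 < w k)
    (hw' : ∀ k, w' k = if k = a then w a / t else if k = c then w c * t else w k) :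
    2/(t+1) ≤ ∑ k, min (w k / ∑ j, w j) (w' k / ∑ j, w' j) := by
  classical
  have ht0 : (0:ℝ) < t := lt_of_lt_of_le one_pos ht
  have ht1 : (0:ℝ) ≤ t^2 - 1 := by nlinarith
  set Z := ∑ j, w j with hZdef
  set Z' := ∑ j, w' j with hZ'def
  have hw'pos : ∀ k, 0 < w' k := by
    intro k; rw [hw' k]
    split_ifs <;> [exact div_pos (hw a) ht0; exact mul_pos (hw c) ht0; exact hw k]
  have hZpos : 0 < Z := Finset.sum_pos (fun k _ => hw k) ⟨a, mem_univ a⟩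
  have hZ'pos : 0 < Z' := Finset.sum_pos (fun k _ => hw'pos k) ⟨a, mem_univ a⟩
  set A := w a with hA
  set C := w c with hC
  set R := ∑ k ∈ (univ.erase a).erase c, w k with hR
  have hcmem : c ∈ univ.erase a := mem_erase.2 ⟨hac.symm, mem_univ c⟩
  have hRnn : 0 ≤ R := Finset.sum_nonneg fun k _ => (hw k).le
  have hsplit : ∀ f : Fin q → ℝ, ∑ k, f k = f a + (f c + ∑ k ∈ (univ.erase a).erase c, f k) := by
    intro f
    rw [← Finset.add_sum_erase _ f (mem_univ a), ← Finset.add_sum_erase _ f hcmem]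
  have hZeq : Z = A + (C + R) := by rw [hZdef, hsplit]
  have hRw' : ∑ k ∈ (univ.erase a).erase c, w' k = R := by
    apply Finset.sum_congr rfl
    intro k hk
    rw [mem_erase] at hk
    have hk2 := mem_erase.1 hk.2
    rw [hw' k, if_neg hk2.1, if_neg hk.1]
  have hZ'eq : Z' = A/t + (C*t + R) := by
    rw [hZ'def, hsplit, hw' a, if_pos rfl, hw' c, if_neg hac.symm, if_pos rfl, hRw']
  have hY : t * Z' = A + C*t^2 + R*t := by
    rw [hZ'eq]; field_simp; ring
  have hZle : Z ≤ t * Z' := by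
    rw [hY, hZeq]
    nlinarith [mul_nonneg (hw c).le ht1, mul_nonneg hRnn (sub_nonneg.2 ht)]
  have hZ'le : Z' ≤ t * Z := by
    have h2a : t * Z' ≤ t * (t * Z) := by
      rw [hY, hZeq]
      nlinarith [mul_nonneg (hw a).le ht1, mul_nonneg hRnn ht1,
        mul_nonneg (hw c).le ht1, mul_nonneg hRnn (sub_nonneg.2 ht)]
    exact le_of_mul_le_mul_left h2a ht0
  have hbound : A/(t*Z') + C/Z + R/(max Z Z') ≤
      ∑ k, min (w k / Z) (w' k / Z') := by
    rw [hsplit fun k => min (w k / Z) (w' k / Z')]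
    have h1 : A/(t*Z') ≤ min (w a / Z) (w' a / Z') := by
      apply le_min
      · exact div_le_div_of_nonneg_left (hw a).le hZpos hZle
      · rw [hw' a, if_pos rfl, div_div]
    have h2 : C/Z ≤ min (w c / Z) (w' c / Z') := by
      apply le_min le_rfl
      rw [hw' c, if_neg hac.symm, if_pos rfl, div_le_div_iff₀ hZpos hZ'pos]
      nlinarith [mul_le_mul_of_nonneg_left hZ'le (hw c).le]
    have h3 : R/(max Z Z') ≤ ∑ k ∈ (univ.erase a).erase c, min (w k / Z) (w' k / Z') := by
      rw [hR, Finset.sum_div]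
      apply Finset.sum_le_sum
      intro k hk
      rw [mem_erase] at hk
      have hk2 := mem_erase.1 hk.2
      have hwk : w' k = w k := by rw [hw' k, if_neg hk2.1, if_neg hk.1]
      apply le_min
      · exact div_le_div_of_nonneg_left (hw k).le hZpos (le_max_left _ _)
      · rw [hwk]
        exact div_le_div_of_nonneg_left (hw k).le hZ'pos (le_max_right _ _)
    linarith [h1, h2, h3]
  refine le_trans ?_ hbound
  rcases le_total Z Z' with hZZ | hZZ
  · rw [max_eq_right hZZ]
    have hsum : A/(t*Z') + C/Z + R/Z' = (A*Z + C*(t*Z') + R*t*Z)/(t*Z*Z') := by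
      field_simp
    rw [hsum, div_le_div_iff₀ (by linarith) (by positivity)]
    have := core2 A C R t (hw a) (hw c) hRnn ht
    rw [← hY] at this
    have hZeq' : A + C + R = Z := by rw [hZeq]; ring
    rw [hZeq'] at this
    nlinarith [this]
  · rw [max_eq_left hZZ]
    have hsum : A/(t*Z') + C/Z + R/Z = (A*Z + C*(t*Z') + R*(t*Z'))/(t*Z*Z') := by
      field_simp
    rw [hsum, div_le_div_iff₀ (by linarith) (by positivity)]
    have := core1 A C R t (hw a) (hw c) hRnn ht
    rw [← hY] at this
    have hZeq' : A + C + R = Z := by rw [hZeq]; ring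
    rw [hZeq'] at this
    nlinarith [this]

lemma tanh_eq (b : ℝ) : Real.tanh b = (Real.exp (2*b) - 1)/(Real.exp (2*b) + 1) := by
  rw [Real.tanh_eq_sinh_div_cosh, Real.sinh_eq, Real.cosh_eq, Real.exp_neg,
    show (2:ℝ)*b = b + b by ring, Real.exp_add]
  have h := Real.exp_pos b
  have h2 : (0:ℝ) < Real.exp b * Real.exp b + 1 := by positivity
  have h3 : (0:ℝ) < Real.exp b + (Real.exp b)⁻¹ := by positivity
  field_simp


lemma finCoupling {q : ℕ} (p p' : Fin q → ℝ) (hp : ∀ k, 0 ≤ p k) (hp' : ∀ k, 0 ≤ p' k)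
    (h1 : ∑ k, p k = 1) (h1' : ∑ k, p' k = 1) :
    ∃ γ : Fin q × Fin q → ℝ, IsCoupling γ p p' ∧
      ∑ j, ∑ k, (if j = k then (0:ℝ) else γ (j, k)) ≤ 1 - ∑ k, min (p k) (p' k) := by
  classical
  set m : Fin q → ℝ := fun k => min (p k) (p' k) with hm
  set D : ℝ := ∑ k, (p k - m k) with hD
  have hmnn : ∀ k, 0 ≤ m k := fun k => le_min (hp k) (hp' k)
  have hpm : ∀ k, 0 ≤ p k - m k := fun k => sub_nonneg.2 (min_le_left _ _)
  have hp'm : ∀ k, 0 ≤ p' k - m k := fun k => sub_nonneg.2 (min_le_right _ _)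
  have hDnn : 0 ≤ D := Finset.sum_nonneg fun k _ => hpm k
  have hD' : ∑ k, (p' k - m k) = D := by
    rw [hD, Finset.sum_sub_distrib, Finset.sum_sub_distrib, h1, h1']
  have hDm : D = 1 - ∑ k, m k := by
    rw [hD, Finset.sum_sub_distrib, h1]
  by_cases hD0 : D = 0
  · have hpe : ∀ k, p k = m k := by
      intro k
      have := (Finset.sum_eq_zero_iff_of_nonneg (fun k _ => hpm k)).1 (hD ▸ hD0) k (mem_univ k)
      linarith
    have hp'e : ∀ k, p' k = m k := by
      intro k
      have := (Finset.sum_eq_zero_iff_of_nonneg (fun k _ => hp'm k)).1 (hD'.trans hD0) k (mem_univ k)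
      linarith
    refine ⟨fun pr => if pr.1 = pr.2 then m pr.1 else 0, ⟨?_, ?_, ?_⟩, ?_⟩
    · intro pr; dsimp only; split_ifs; exacts [hmnn _, le_rfl]
    · intro a; rw [hpe a]; simp
    · intro b; rw [hp'e b]
      rw [show ∑ a, (if (a, b).1 = (a, b).2 then m (a, b).1 else 0) =
        ∑ a, (if a = b then m a else 0) from rfl]
      simp
    · have : ∀ j k : Fin q, (if j = k then (0:ℝ) else if (j, k).1 = (j, k).2 then m j else 0) = 0 := by
        intro j k; by_cases h : j = k <;> simp [h]
      simp only [this, Finset.sum_const_zero]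
      linarith [hDm ▸ hD0 ▸ le_of_eq (rfl : (0:ℝ) = 0), hDm]
  · have hDpos : 0 < D := lt_of_le_of_ne hDnn (Ne.symm hD0)
    refine ⟨fun pr => (if pr.1 = pr.2 then m pr.1 else 0) + (p pr.1 - m pr.1) * (p' pr.2 - m pr.2) / D,
      ⟨?_, ?_, ?_⟩, ?_⟩
    · intro pr
      have : 0 ≤ (p pr.1 - m pr.1) * (p' pr.2 - m pr.2) / D :=
        div_nonneg (mul_nonneg (hpm _) (hp'm _)) hDnn
      dsimp only; split_ifs
      · exact add_nonneg (hmnn _) this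
      · simpa using this
    · intro a
      rw [Finset.sum_add_distrib]
      have e1 : ∑ b, (if (a, b).1 = (a, b).2 then m (a, b).1 else 0) = m a := by simp
      have e2 : ∑ b, (p a - m a) * (p' b - m b) / D = (p a - m a) := by
        rw [← Finset.sum_div, ← Finset.mul_sum, hD', mul_div_assoc, div_self hD0, mul_one]
      rw [e1, e2]; ring
    · intro b
      rw [Finset.sum_add_distrib]
      have e1 : ∑ a, (if (a, b).1 = (a, b).2 then m (a, b).1 else 0) = m b := by
        rw [show ∑ a, (if (a, b).1 = (a, b).2 then m (a, b).1 else 0) =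
          ∑ a, (if a = b then m a else 0) from rfl]
        simp
      have e2 : ∑ a, (p a - m a) * (p' b - m b) / D = (p' b - m b) := by
        rw [← Finset.sum_div, ← Finset.sum_mul, hD, mul_comm, mul_div_assoc, div_self hD0, mul_one]
      rw [e1, e2]; ring
    · have hle : ∀ j k : Fin q,
          (if j = k then (0:ℝ) else (if (j,k).1 = (j,k).2 then m (j,k).1 else 0) +
            (p (j,k).1 - m (j,k).1) * (p' (j,k).2 - m (j,k).2) / D) ≤
          (p j - m j) * (p' k - m k) / D := by
        intro j k
        by_cases h : j = k <;>
          simp only [h, if_true, if_false, reduceIte] <;>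
        · first
          | exact div_nonneg (mul_nonneg (hpm _) (hp'm _)) hDnn
          | simp [h]
      calc ∑ j, ∑ k, (if j = k then (0:ℝ) else (if (j,k).1 = (j,k).2 then m (j,k).1 else 0) +
            (p (j,k).1 - m (j,k).1) * (p' (j,k).2 - m (j,k).2) / D)
          ≤ ∑ j, ∑ k, (p j - m j) * (p' k - m k) / D := by
            apply Finset.sum_le_sum; intro j _; apply Finset.sum_le_sum; intro k _; exact hle j k
        _ = D := by
            have e : ∀ j : Fin q, ∑ k, (p j - m j) * (p' k - m k) / D = (p j - m j) := by
              intro j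
              rw [← Finset.sum_div, ← Finset.mul_sum, hD', mul_div_assoc, div_self hD0, mul_one]
            rw [Finset.sum_congr rfl fun j _ => e j]
        _ = 1 - ∑ k, min (p k) (p' k) := hDm


lemma compCoupling {Ω : Type*} [Fintype Ω] (d : Ω → Ω → ℝ)
    (hd : ∀ a b c, d a c ≤ d a b + d b c)
    (μ₁ μ₂ μ₃ : Ω → ℝ) (γ₁ γ₂ : Ω × Ω → ℝ)
    (h₁ : IsCoupling γ₁ μ₁ μ₂) (h₂ : IsCoupling γ₂ μ₂ μ₃) :
    ∃ γ : Ω × Ω → ℝ, IsCoupling γ μ₁ μ₃ ∧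
      ∑ p : Ω × Ω, γ p * d p.1 p.2 ≤
        ∑ p : Ω × Ω, γ₁ p * d p.1 p.2 + ∑ p : Ω × Ω, γ₂ p * d p.1 p.2 := by
  classical
  obtain ⟨hnn₁, hr₁, hc₁⟩ := h₁
  obtain ⟨hnn₂, hr₂, hc₂⟩ := h₂
  set T : Ω → Ω → Ω → ℝ :=
    fun a b c => if μ₂ b = 0 then 0 else γ₁ (a, b) * γ₂ (b, c) / μ₂ b with hT
  have hμ₂nn : ∀ b, 0 ≤ μ₂ b := fun b => (hc₁ b) ▸ Finset.sum_nonneg fun a _ => hnn₁ (a, b)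
  have hγ₁z : ∀ a b, μ₂ b = 0 → γ₁ (a, b) = 0 := by
    intro a b hb
    have hle : γ₁ (a, b) ≤ ∑ a', γ₁ (a', b) :=
      Finset.single_le_sum (fun a' _ => hnn₁ (a', b)) (mem_univ a)
    rw [hc₁ b, hb] at hle
    linarith [hnn₁ (a, b)]
  have hγ₂z : ∀ b c, μ₂ b = 0 → γ₂ (b, c) = 0 := by
    intro b c hb
    have hle : γ₂ (b, c) ≤ ∑ c', γ₂ (b, c') :=
      Finset.single_le_sum (fun c' _ => hnn₂ (b, c')) (mem_univ c)
    rw [hr₂ b, hb] at hle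
    linarith [hnn₂ (b, c)]
  have hTnn : ∀ a b c, 0 ≤ T a b c := by
    intro a b c; rw [hT]; dsimp only
    split_ifs with h
    · exact le_rfl
    · exact div_nonneg (mul_nonneg (hnn₁ _) (hnn₂ _)) (hμ₂nn b)
  have hTrow : ∀ a b, ∑ c, T a b c = γ₁ (a, b) := by
    intro a b
    rw [hT]; dsimp only
    by_cases h : μ₂ b = 0
    · simp [h, hγ₁z a b h]
    · simp only [h, if_false]
      rw [← Finset.sum_div, ← Finset.mul_sum, hr₂ b, mul_div_assoc, div_self h, mul_one]
  have hTcol : ∀ b c, ∑ a, T a b c = γ₂ (b, c) := by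
    intro b c
    rw [hT]; dsimp only
    by_cases h : μ₂ b = 0
    · simp [h, hγ₂z b c h]
    · simp only [h, if_false]
      rw [← Finset.sum_div, ← Finset.sum_mul, hc₁ b, mul_comm, mul_div_assoc, div_self h, mul_one]
  refine ⟨fun pr => ∑ b, T pr.1 b pr.2, ⟨?_, ?_, ?_⟩, ?_⟩
  · intro pr; exact Finset.sum_nonneg fun b _ => hTnn _ _ _
  · intro a
    rw [Finset.sum_comm]
    rw [Finset.sum_congr rfl fun b _ => hTrow a b]
    exact hr₁ a
  · intro c
    rw [Finset.sum_comm]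
    rw [Finset.sum_congr rfl fun b _ => hTcol b c]
    exact hc₂ c
  · rw [Fintype.sum_prod_type, Fintype.sum_prod_type, Fintype.sum_prod_type]
    calc ∑ a, ∑ c, (∑ b, T a b c) * d a c
        = ∑ a, ∑ c, ∑ b, T a b c * d a c := by
          refine Finset.sum_congr rfl fun a _ => Finset.sum_congr rfl fun c _ => ?_
          rw [Finset.sum_mul]
      _ ≤ ∑ a, ∑ c, ∑ b, T a b c * (d a b + d b c) := by
          refine Finset.sum_le_sum fun a _ => Finset.sum_le_sum fun c _ =>
            Finset.sum_le_sum fun b _ => ?_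
          exact mul_le_mul_of_nonneg_left (hd a b c) (hTnn a b c)
      _ = ∑ a, ∑ c, ∑ b, T a b c * d a b + ∑ a, ∑ c, ∑ b, T a b c * d b c := by
          simp only [mul_add, Finset.sum_add_distrib]
      _ = ∑ a, ∑ b, γ₁ (a, b) * d a b + ∑ b, ∑ c, γ₂ (b, c) * d b c := by
          congr 1
          · refine Finset.sum_congr rfl fun a _ => ?_
            rw [Finset.sum_comm]
            refine Finset.sum_congr rfl fun b _ => ?_
            rw [← Finset.sum_mul, hTrow a b]
          · have e1 : ∑ a, ∑ c, ∑ b, T a b c * d b c = ∑ c, ∑ a, ∑ b, T a b c * d b c :=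
              Finset.sum_comm
            have e2 : ∑ c, ∑ a, ∑ b, T a b c * d b c = ∑ c, ∑ b, ∑ a, T a b c * d b c :=
              Finset.sum_congr rfl fun c _ => Finset.sum_comm
            have e3 : ∑ c, ∑ b, ∑ a, T a b c * d b c = ∑ c, ∑ b, γ₂ (b, c) * d b c :=
              Finset.sum_congr rfl fun c _ => Finset.sum_congr rfl fun b _ => by
                rw [← Finset.sum_mul, hTcol b c]
            have e4 : ∑ c, ∑ b, γ₂ (b, c) * d b c = ∑ b, ∑ c, γ₂ (b, c) * d b c :=
              Finset.sum_comm
            rw [e1, e2, e3, e4]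



/-- number of neighbours of `v` with colour `k`. -/
def nbr [Fintype V] {q : ℕ} (G : SimpleGraph V) (σ : V → Fin q) (v : V) (k : Fin q) : ℕ :=
  (univ.filter fun u => G.Adj v u ∧ σ u = k).card

lemma pottsGibbs_pos [Fintype V] {q : ℕ} (G : SimpleGraph V) (β : ℝ) (hq : 0 < q)
    (σ : V → Fin q) : 0 < pottsGibbs q G β σ := by
  have : Nonempty (V → Fin q) := ⟨fun _ => ⟨0, hq⟩⟩
  exact div_pos (Real.exp_pos _)
    (Finset.sum_pos (fun τ _ => Real.exp_pos _) univ_nonempty)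

lemma sum_update [Fintype V] {q : ℕ} (v : V) (σ : V → Fin q) (g : (V → Fin q) → ℝ) :
    ∑ τ : V → Fin q, (if ∀ w, w ≠ v → τ w = σ w then g τ else 0) =
      ∑ k, g (Function.update σ v k) := by
  classical
  rw [← Finset.sum_filter]
  have hfe : univ.filter (fun τ : V → Fin q => ∀ w, w ≠ v → τ w = σ w) =
      Finset.image (fun k => Function.update σ v k) univ := by
    ext τ
    simp only [mem_filter, mem_univ, true_and, Finset.mem_image]
    constructor
    · intro h
      refine ⟨τ v, ?_⟩
      funext w
      by_cases hw : w = v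
      · subst hw; rw [Function.update_self]
      · rw [Function.update_of_ne hw, h w hw]
    · rintro ⟨k, _, rfl⟩ w hw
      rw [Function.update_of_ne hw]
  rw [hfe, Finset.sum_image]
  intro k _ k' _ h
  have := congrFun h v
  simpa [Function.update_self] using this

lemma negβH_update [Fintype V] [Nonempty V] {q : ℕ} (G : SimpleGraph V) (β : ℝ)
    (v : V) (σ : V → Fin q) :
    ∃ c0 : ℝ, ∀ k, -β * pottsH G (Function.update σ v k) =
      c0 + 2 * (β / Fintype.card V) * nbr G σ v k := by
  classical
  have hN : (0:ℝ) < Fintype.card V := by exact_mod_cast Fintype.card_pos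
  set S0 : ℝ := ∑ u ∈ univ.erase v, ∑ w ∈ univ.erase v,
    (if G.Adj u w ∧ σ u = σ w then (1:ℝ) else 0) with hS0
  refine ⟨β * (Fintype.card V : ℝ)⁻¹ * S0, fun k => ?_⟩
  set up := Function.update σ v k with hup
  have hupv : up v = k := Function.update_self v k σ
  have hupw : ∀ w, w ≠ v → up w = σ w := fun w hw => Function.update_of_ne hw k σ
  set F : V → V → ℝ := fun u w => if G.Adj u w ∧ up u = up w then (1:ℝ) else 0 with hF
  have hrow : ∀ (f : V → ℝ), ∑ u : V, f u = f v + ∑ u ∈ univ.erase v, f u :=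
    fun f => (Finset.add_sum_erase _ f (mem_univ v)).symm
  have hextend : ∀ (g : V → ℝ), g v = 0 → ∑ u ∈ univ.erase v, g u = ∑ u : V, g u := by
    intro g hg
    rw [hrow g, hg, zero_add]
  have e0 : F v v = 0 := by
    rw [hF]; dsimp only; rw [if_neg]; rintro ⟨h, -⟩; exact G.irrefl h
  have e1 : ∑ w ∈ univ.erase v, F v w = nbr G σ v k := by
    have : ∀ w ∈ univ.erase v, F v w = if G.Adj v w ∧ σ w = k then (1:ℝ) else 0 := by
      intro w hw
      have hwv := (mem_erase.1 hw).1
      rw [hF]; dsimp only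
      rw [hupv, hupw w hwv]
      congr 1
      simp only [eq_iff_iff]
      exact ⟨fun ⟨h1, h2⟩ => ⟨h1, h2.symm⟩, fun ⟨h1, h2⟩ => ⟨h1, h2.symm⟩⟩
    rw [Finset.sum_congr rfl this,
      hextend _ (by rw [if_neg]; rintro ⟨h, -⟩; exact G.irrefl h),
      Finset.sum_boole]
    rfl
  have e2 : ∑ u ∈ univ.erase v, F u v = nbr G σ v k := by
    have : ∀ u ∈ univ.erase v, F u v = if G.Adj v u ∧ σ u = k then (1:ℝ) else 0 := by
      intro u hu
      have huv := (mem_erase.1 hu).1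
      rw [hF]; dsimp only
      rw [hupv, hupw u huv]
      congr 1
      simp only [eq_iff_iff]
      exact ⟨fun ⟨h1, h2⟩ => ⟨G.adj_symm h1, h2⟩, fun ⟨h1, h2⟩ => ⟨G.adj_symm h1, h2⟩⟩
    rw [Finset.sum_congr rfl this,
      hextend _ (by rw [if_neg]; rintro ⟨h, -⟩; exact G.irrefl h),
      Finset.sum_boole]
    rfl
  have e3 : ∑ u ∈ univ.erase v, ∑ w ∈ univ.erase v, F u w = S0 := by
    rw [hS0]
    refine Finset.sum_congr rfl fun u hu => Finset.sum_congr rfl fun w hw => ?_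
    rw [hF]; dsimp only
    rw [hupw u (mem_erase.1 hu).1, hupw w (mem_erase.1 hw).1]
  have key : ∑ u : V, ∑ w : V, F u w = S0 + 2 * nbr G σ v k := by
    rw [hrow (fun u => ∑ w : V, F u w)]
    rw [hrow (fun w => F v w)]
    rw [Finset.sum_congr rfl (fun u (hu : u ∈ univ.erase v) => hrow (fun w => F u w)),
      Finset.sum_add_distrib]
    rw [e0, e1, e2, e3]
    ring
  have hH : pottsH G up = -(Fintype.card V : ℝ)⁻¹ * (S0 + 2 * nbr G σ v k) := by
    rw [pottsH, ← key]
  rw [hH]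
  field_simp

lemma condSpin_potts [Fintype V] [Nonempty V] {q : ℕ} (hq : 0 < q) (G : SimpleGraph V)
    (β : ℝ) (v : V) (σ : V → Fin q) (k : Fin q) :
    condSpin (pottsGibbs q G β) v σ k =
      Real.exp (2 * (β / Fintype.card V) * nbr G σ v k) /
        ∑ k', Real.exp (2 * (β / Fintype.card V) * nbr G σ v k') := by
  classical
  obtain ⟨c0, hc0⟩ := negβH_update G β v σ
  have : Nonempty (V → Fin q) := ⟨fun _ => ⟨0, hq⟩⟩
  set Zμ : ℝ := ∑ τ : V → Fin q, Real.exp (-β * pottsH G τ) with hZμ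
  have hZμpos : 0 < Zμ := Finset.sum_pos (fun τ _ => Real.exp_pos _) univ_nonempty
  set w : Fin q → ℝ := fun k' => Real.exp (2 * (β / Fintype.card V) * nbr G σ v k') with hwdef
  have hwpos : ∀ k', 0 < w k' := fun k' => Real.exp_pos _
  have : Nonempty (Fin q) := ⟨⟨0, hq⟩⟩
  have hswpos : 0 < ∑ k', w k' := Finset.sum_pos (fun k' _ => hwpos k') univ_nonempty
  have hμ : ∀ k', pottsGibbs q G β (Function.update σ v k') =
      (Real.exp c0 / Zμ) * w k' := by
    intro k'
    rw [pottsGibbs, hc0 k', Real.exp_add, hwdef]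
    dsimp only
    rw [div_mul_eq_mul_div, ← hZμ]
  rw [condSpin]
  rw [Finset.sum_congr rfl fun k' _ => hμ k', hμ k, ← Finset.mul_sum]
  rw [mul_div_mul_left _ _ (by positivity : Real.exp c0 / Zμ ≠ 0)]

lemma condSpin_potts_nonneg [Fintype V] [Nonempty V] {q : ℕ} (hq : 0 < q)
    (G : SimpleGraph V) (β : ℝ) (v : V) (σ : V → Fin q) (k : Fin q) :
    0 ≤ condSpin (pottsGibbs q G β) v σ k := by
  rw [condSpin_potts hq]
  have : Nonempty (Fin q) := ⟨⟨0, hq⟩⟩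
  positivity

lemma condSpin_potts_sum [Fintype V] [Nonempty V] {q : ℕ} (hq : 0 < q)
    (G : SimpleGraph V) (β : ℝ) (v : V) (σ : V → Fin q) :
    ∑ k, condSpin (pottsGibbs q G β) v σ k = 1 := by
  have : Nonempty (Fin q) := ⟨⟨0, hq⟩⟩
  rw [Finset.sum_congr rfl fun k _ => condSpin_potts hq G β v σ k, ← Finset.sum_div,
    div_self]
  exact ne_of_gt (Finset.sum_pos (fun k _ => Real.exp_pos _) univ_nonempty)


lemma nbr_eq_of_not_adj [Fintype V] {q : ℕ} (G : SimpleGraph V) (σ τ : V → Fin q)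
    (u v : V) (hστ : ∀ w, w ≠ u → σ w = τ w) (hadj : ¬ G.Adj v u) (k : Fin q) :
    nbr G σ v k = nbr G τ v k := by
  unfold nbr
  congr 1
  apply Finset.filter_congr
  intro x _
  by_cases hx : x = u
  · subst hx; simp [hadj]
  · rw [hστ x hx]

lemma nbr_insert [Fintype V] {q : ℕ} (G : SimpleGraph V) (σ τ : V → Fin q)
    (u v : V) (hστ : ∀ w, w ≠ u → σ w = τ w) (hadj : G.Adj v u)
    (hne : σ u ≠ τ u) : nbr G σ v (σ u) = nbr G τ v (σ u) + 1 := by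
  unfold nbr
  have hset : (univ.filter fun x => G.Adj v x ∧ σ x = σ u) =
      insert u (univ.filter fun x => G.Adj v x ∧ τ x = σ u) := by
    ext x
    simp only [mem_filter, mem_univ, true_and, Finset.mem_insert]
    by_cases hx : x = u
    · subst hx; simp [hadj]
    · rw [hστ x hx]
      constructor
      · exact fun h => Or.inr h
      · rintro (h | h)
        · exact absurd h hx
        · exact h
  rw [hset, Finset.card_insert_of_notMem]
  simp only [mem_filter, mem_univ, true_and, not_and]
  intro _
  exact fun h => hne h.symm

lemma nbr_other [Fintype V] {q : ℕ} (G : SimpleGraph V) (σ τ : V → Fin q)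
    (u v : V) (hστ : ∀ w, w ≠ u → σ w = τ w) (k : Fin q)
    (hka : k ≠ σ u) (hkc : k ≠ τ u) : nbr G σ v k = nbr G τ v k := by
  unfold nbr
  congr 1
  apply Finset.filter_congr
  intro x _
  by_cases hx : x = u
  · subst hx
    constructor
    · rintro ⟨h1, h2⟩; exact absurd h2.symm hka
    · rintro ⟨h1, h2⟩; exact absurd h2.symm hkc
  · rw [hστ x hx]

lemma hamming_triangle [Fintype V] {q : ℕ} (σ ρ τ : V → Fin q) :
    hamming σ τ ≤ hamming σ ρ + hamming ρ τ := by
  unfold hamming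
  have hsub : (univ.filter fun v => σ v ≠ τ v) ⊆
      (univ.filter fun v => σ v ≠ ρ v) ∪ (univ.filter fun v => ρ v ≠ τ v) := by
    intro x hx
    rw [mem_filter] at hx
    rw [Finset.mem_union, mem_filter, mem_filter]
    by_cases h : σ x = ρ x
    · refine Or.inr ⟨mem_univ x, ?_⟩
      intro h2; exact hx.2 (h.trans h2)
    · exact Or.inl ⟨mem_univ x, h⟩
  have := le_trans (Finset.card_le_card hsub) (Finset.card_union_le _ _)
  exact_mod_cast this

lemma hamming_update_self [Fintype V] {q : ℕ} (σ τ : V → Fin q) (u : V)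
    (h : ∀ w, w ≠ u → σ w = τ w) (j k : Fin q) :
    hamming (Function.update σ u j) (Function.update τ u k) =
      if j = k then 0 else 1 := by
  unfold hamming
  by_cases hjk : j = k
  · subst hjk
    rw [if_pos rfl]
    norm_num
    intro x
    by_cases hx : x = u
    · subst hx; rw [Function.update_self, Function.update_self]
    · rw [Function.update_of_ne hx, Function.update_of_ne hx, h x hx]
  · rw [if_neg hjk]
    have hset : (univ.filter fun x => Function.update σ u j x ≠ Function.update τ u k x)
        = {u} := by
      ext x
      simp only [mem_filter, mem_univ, true_and, Finset.mem_singleton]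
      constructor
      · intro hx
        by_contra hxu
        exact hx (by rw [Function.update_of_ne hxu, Function.update_of_ne hxu, h x hxu])
      · rintro rfl
        rw [Function.update_self, Function.update_self]
        exact hjk
    rw [hset, Finset.card_singleton]
    norm_num

lemma hamming_update_ne [Fintype V] {q : ℕ} (σ τ : V → Fin q) (u : V)
    (h : ∀ w, w ≠ u → σ w = τ w) (hu : σ u ≠ τ u) (v : V) (hvu : v ≠ u) (j k : Fin q) :
    hamming (Function.update σ v j) (Function.update τ v k) =
      if j = k then 1 else 2 := by
  unfold hamming
  have humem : Function.update σ v j u ≠ Function.update τ v k u := by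
    rw [Function.update_of_ne (Ne.symm hvu), Function.update_of_ne (Ne.symm hvu)]
    exact hu
  have hother : ∀ x, x ≠ u → x ≠ v →
      ¬ (Function.update σ v j x ≠ Function.update τ v k x) := by
    intro x hxu hxv
    rw [Function.update_of_ne hxv, Function.update_of_ne hxv, h x hxu]
    exact not_not_intro rfl
  by_cases hjk : j = k
  · subst hjk
    rw [if_pos rfl]
    have hset : (univ.filter fun x => Function.update σ v j x ≠ Function.update τ v j x)
        = {u} := by
      ext x
      simp only [mem_filter, mem_univ, true_and, Finset.mem_singleton]
      constructor
      · intro hx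
        by_contra hxu
        by_cases hxv : x = v
        · subst hxv; rw [Function.update_self, Function.update_self] at hx; exact hx rfl
        · exact hother x hxu hxv hx
      · rintro rfl; exact humem
    rw [hset, Finset.card_singleton]
    norm_num
  · rw [if_neg hjk]
    have hset : (univ.filter fun x => Function.update σ v j x ≠ Function.update τ v k x)
        = {u, v} := by
      ext x
      simp only [mem_filter, mem_univ, true_and, Finset.mem_insert, Finset.mem_singleton]
      constructor
      · intro hx
        by_cases hxu : x = u
        · exact Or.inl hxu
        · by_cases hxv : x = v
          · exact Or.inr hxv
          · exact absurd hx (hother x hxu hxv)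
      · rintro (rfl | rfl)
        · exact humem
        · rw [Function.update_self, Function.update_self]; exact hjk
    rw [hset, Finset.card_pair (Ne.symm hvu)]
    norm_num

lemma glauber_potts_nonneg [Fintype V] [Nonempty V] {q : ℕ} (hq : 0 < q)
    (G : SimpleGraph V) (β : ℝ) (σ τ' : V → Fin q) :
    0 ≤ glauber (pottsGibbs q G β) σ τ' := by
  unfold glauber
  apply mul_nonneg (by positivity)
  apply Finset.sum_nonneg
  intro v _
  split_ifs
  · exact condSpin_potts_nonneg hq G β v σ _
  · exact le_rfl

lemma oneStep [Fintype V] [Nonempty V] {q : ℕ} (hq : 0 < q) (G : SimpleGraph V)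
    (β : ℝ) (hβ : 0 ≤ β) (σ τ : V → Fin q) (u : V)
    (hστ : ∀ w, w ≠ u → σ w = τ w) (hu : σ u ≠ τ u) :
    ∃ γ : (V → Fin q) × (V → Fin q) → ℝ,
      IsCoupling γ (glauber (pottsGibbs q G β) σ) (glauber (pottsGibbs q G β) τ) ∧
      ∑ p : (V → Fin q) × (V → Fin q), γ p * hamming p.1 p.2 ≤
        1 - (1 - (G.maxDegree : ℝ) * Real.tanh (β / Fintype.card V)) /
          Fintype.card V := by
  classical
  have : Nonempty (Fin q) := ⟨⟨0, hq⟩⟩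
  set N : ℝ := (Fintype.card V : ℝ) with hN
  have hNpos : (0:ℝ) < N := by rw [hN]; exact_mod_cast Fintype.card_pos
  set b : ℝ := β / N with hb
  have hbnn : 0 ≤ b := div_nonneg hβ hNpos.le
  set t : ℝ := Real.exp (2*b) with htdef
  have ht1 : 1 ≤ t := by
    rw [htdef, ← Real.exp_zero]
    exact Real.exp_le_exp.2 (by linarith)
  have hTnn : 0 ≤ Real.tanh b := by
    rw [tanh_eq b, ← htdef]
    exact div_nonneg (by linarith) (by linarith)
  set μ := pottsGibbs q G β with hμ
  set pσ : V → Fin q → ℝ := fun v k => condSpin μ v σ k with hpσ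
  set pτ : V → Fin q → ℝ := fun v k => condSpin μ v τ k with hpτ
  have hpσnn : ∀ v k, 0 ≤ pσ v k := fun v k => condSpin_potts_nonneg hq G β v σ k
  have hpτnn : ∀ v k, 0 ≤ pτ v k := fun v k => condSpin_potts_nonneg hq G β v τ k
  have hpσ1 : ∀ v, ∑ k, pσ v k = 1 := fun v => condSpin_potts_sum hq G β v σ
  have hpτ1 : ∀ v, ∑ k, pτ v k = 1 := fun v => condSpin_potts_sum hq G β v τ
  choose γv hγvC hγvO using fun v =>
    finCoupling (pσ v) (pτ v) (hpσnn v) (hpτnn v) (hpσ1 v) (hpτ1 v)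
  -- off-diagonal mass bounds
  have hoff : ∀ v, ∑ j, ∑ k, (if j = k then (0:ℝ) else γv v (j, k)) ≤
      (if G.Adj v u then Real.tanh b else 0) := by
    intro v
    by_cases hadj : G.Adj v u
    · rw [if_pos hadj]
      set w : Fin q → ℝ := fun k => Real.exp (2*b*(nbr G σ v k)) with hwdef
      set w' : Fin q → ℝ := fun k => Real.exp (2*b*(nbr G τ v k)) with hw'def
      have hwpos : ∀ k, 0 < w k := fun k => Real.exp_pos _
      have hw' : ∀ k, w' k =
          if k = σ u then w (σ u) / t else if k = τ u then w (τ u) * t else w k := by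
        intro k
        by_cases hka : k = σ u
        · subst hka
          rw [if_pos rfl, hw'def, hwdef]
          dsimp only
          rw [nbr_insert G σ τ u v hστ hadj hu, htdef, ← Real.exp_sub]
          congr 1
          push_cast
          ring
        · rw [if_neg hka]
          by_cases hkc : k = τ u
          · subst hkc
            rw [if_pos rfl, hw'def, hwdef]
            dsimp only
            have h2 : nbr G τ v (τ u) = nbr G σ v (τ u) + 1 := by
              have := nbr_insert G τ σ u v (fun w hw => (hστ w hw).symm) hadj (Ne.symm hu)
              exact this
            rw [h2, htdef, ← Real.exp_add]
            congr 1
            push_cast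
            ring
          · rw [if_neg hkc, hw'def, hwdef]
            dsimp only
            rw [nbr_other G σ τ u v hστ k hka hkc]
      have hmin := minsum (σ u) (τ u) hu t ht1 w w' hwpos hw'
      have harg : ∀ k', Real.exp (2 * (β / (Fintype.card V : ℝ)) * (nbr G σ v k' : ℝ)) = w k' := by
        intro k'
        rw [hwdef]
      have harg' : ∀ k', Real.exp (2 * (β / (Fintype.card V : ℝ)) * (nbr G τ v k' : ℝ)) = w' k' := by
        intro k'
        rw [hw'def]
      have hpeq : ∀ k, pσ v k = w k / ∑ j, w j := by
        intro k
        rw [hpσ, hμ]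
        dsimp only
        rw [condSpin_potts hq G β v σ k, harg k,
          Finset.sum_congr rfl fun k' _ => harg k']
      have hpeq' : ∀ k, pτ v k = w' k / ∑ j, w' j := by
        intro k
        rw [hpτ, hμ]
        dsimp only
        rw [condSpin_potts hq G β v τ k, harg' k,
          Finset.sum_congr rfl fun k' _ => harg' k']
      refine le_trans (hγvO v) ?_
      have : ∑ k, min (pσ v k) (pτ v k) = ∑ k, min (w k / ∑ j, w j) (w' k / ∑ j, w' j) :=
        Finset.sum_congr rfl fun k _ => by rw [hpeq k, hpeq' k]
      rw [this]
      rw [tanh_eq b, ← htdef]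
      have htpos : (0:ℝ) < t + 1 := by linarith
      have heq : 1 - 2/(t+1) = (t-1)/(t+1) := by field_simp; ring
      linarith [hmin]
    · rw [if_neg hadj]
      have hpeq : pσ v = pτ v := by
        by_cases hvu : v = u
        · subst hvu
          funext k
          rw [hpσ, hpτ]
          dsimp only
          unfold condSpin
          have hupd : ∀ k' : Fin q, Function.update σ v k' = Function.update τ v k' := by
            intro k'
            funext x
            by_cases hx : x = v
            · subst hx; rw [Function.update_self, Function.update_self]
            · rw [Function.update_of_ne hx, Function.update_of_ne hx, hστ x hx]
          rw [hupd k]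
          congr 1
          apply Finset.sum_congr rfl
          intro k' _
          rw [hupd k']
        · funext k
          rw [hpσ, hpτ]
          dsimp only
          rw [hμ, condSpin_potts hq G β v σ k, condSpin_potts hq G β v τ k]
          have hnb : ∀ k', nbr G σ v k' = nbr G τ v k' :=
            nbr_eq_of_not_adj G σ τ u v hστ hadj
          rw [hnb k]
          congr 1
          apply Finset.sum_congr rfl
          intro k' _
          rw [hnb k']
      refine le_trans (hγvO v) ?_
      rw [hpeq]
      have : ∑ k, min (pτ v k) (pτ v k) = 1 := by
        rw [Finset.sum_congr rfl fun k _ => min_self (pτ v k)]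
        exact hpτ1 v
      rw [this]
      norm_num
  -- the coupling
  set I1 : V → (V → Fin q) → ℝ :=
    fun v σ' => if ∀ w, w ≠ v → σ' w = σ w then 1 else 0 with hI1
  set I2 : V → (V → Fin q) → ℝ :=
    fun v τ' => if ∀ w, w ≠ v → τ' w = τ w then 1 else 0 with hI2
  have hI1b : ∀ v σ' (x : ℝ), I1 v σ' * x = if ∀ w, w ≠ v → σ' w = σ w then x else 0 := by
    intro v σ' x; rw [hI1]; dsimp only; rw [ite_mul, one_mul, zero_mul]
  have hI2b : ∀ v τ' (x : ℝ), I2 v τ' * x = if ∀ w, w ≠ v → τ' w = τ w then x else 0 := by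
    intro v τ' x; rw [hI2]; dsimp only; rw [ite_mul, one_mul, zero_mul]
  have hI1nn : ∀ v σ', 0 ≤ I1 v σ' := by
    intro v σ'; rw [hI1]; dsimp only; split_ifs; exacts [zero_le_one, le_rfl]
  have hI2nn : ∀ v τ', 0 ≤ I2 v τ' := by
    intro v τ'; rw [hI2]; dsimp only; split_ifs; exacts [zero_le_one, le_rfl]
  refine ⟨fun pr => N⁻¹ * ∑ v, I1 v pr.1 * (I2 v pr.2 * γv v (pr.1 v, pr.2 v)),
    ⟨?_, ?_, ?_⟩, ?_⟩
  · intro pr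
    apply mul_nonneg (by positivity)
    apply Finset.sum_nonneg
    intro v _
    exact mul_nonneg (hI1nn v _) (mul_nonneg (hI2nn v _) ((hγvC v).1 _))
  · intro a
    dsimp only
    rw [← Finset.mul_sum, Finset.sum_comm]
    rw [glauber]
    congr 1
    apply Finset.sum_congr rfl
    intro v _
    have inner : ∑ τ' : V → Fin q, I2 v τ' * γv v (a v, τ' v) = condSpin μ v σ (a v) := by
      rw [Finset.sum_congr rfl fun τ' (_ : τ' ∈ univ) => hI2b v τ' (γv v (a v, τ' v))]
      rw [sum_update v τ (fun τ' => γv v (a v, τ' v))]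
      rw [Finset.sum_congr rfl fun k (_ : k ∈ univ) => by rw [Function.update_self]]
      exact (hγvC v).2.1 (a v)
    rw [← Finset.mul_sum, inner, hI1b]
  · intro bb
    dsimp only
    rw [← Finset.mul_sum, Finset.sum_comm]
    rw [glauber]
    congr 1
    apply Finset.sum_congr rfl
    intro v _
    have step : ∀ σ' : V → Fin q, I1 v σ' * (I2 v bb * γv v (σ' v, bb v)) =
        I2 v bb * (I1 v σ' * γv v (σ' v, bb v)) := by intro σ'; ring
    rw [Finset.sum_congr rfl fun σ' (_ : σ' ∈ univ) => step σ', ← Finset.mul_sum]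
    have inner : ∑ σ' : V → Fin q, I1 v σ' * γv v (σ' v, bb v) = condSpin μ v τ (bb v) := by
      rw [Finset.sum_congr rfl fun σ' (_ : σ' ∈ univ) => hI1b v σ' (γv v (σ' v, bb v))]
      rw [sum_update v σ (fun σ' => γv v (σ' v, bb v))]
      rw [Finset.sum_congr rfl fun j (_ : j ∈ univ) => by rw [Function.update_self]]
      exact (hγvC v).2.2 (bb v)
    rw [inner, hI2b]
  · -- cost bound
    dsimp only
    set f : V → (V → Fin q) → (V → Fin q) → ℝ :=
      fun v σ' τ' => I1 v σ' * (I2 v τ' * (γv v (σ' v, τ' v) * hamming σ' τ')) with hf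
    have e1 : ∀ σ' τ' : V → Fin q,
        (N⁻¹ * ∑ v, I1 v σ' * (I2 v τ' * γv v (σ' v, τ' v))) * hamming σ' τ'
          = N⁻¹ * ∑ v, f v σ' τ' := by
      intro σ' τ'
      rw [mul_assoc, Finset.sum_mul]
      congr 1
      apply Finset.sum_congr rfl
      intro v _
      rw [hf]; dsimp only; ring
    have hSv : ∀ v, ∑ σ' : V → Fin q, ∑ τ' : V → Fin q, f v σ' τ'
        = ∑ j, ∑ k, γv v (j, k) *
            hamming (Function.update σ v j) (Function.update τ v k) := by
      intro v
      have inner : ∀ σ' : V → Fin q, ∑ τ' : V → Fin q, f v σ' τ'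
          = I1 v σ' * ∑ k, γv v (σ' v, k) * hamming σ' (Function.update τ v k) := by
        intro σ'
        rw [hf]; dsimp only
        rw [← Finset.mul_sum]
        congr 1
        rw [Finset.sum_congr rfl fun τ' (_ : τ' ∈ univ) =>
          hI2b v τ' (γv v (σ' v, τ' v) * hamming σ' τ')]
        rw [sum_update v τ (fun τ' => γv v (σ' v, τ' v) * hamming σ' τ')]
        apply Finset.sum_congr rfl
        intro k _
        rw [Function.update_self]
      rw [Finset.sum_congr rfl fun σ' (_ : σ' ∈ univ) => inner σ']
      rw [Finset.sum_congr rfl fun σ' (_ : σ' ∈ univ) =>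
        hI1b v σ' (∑ k, γv v (σ' v, k) * hamming σ' (Function.update τ v k))]
      rw [sum_update v σ (fun σ' => ∑ k, γv v (σ' v, k) * hamming σ' (Function.update τ v k))]
      apply Finset.sum_congr rfl
      intro j _
      apply Finset.sum_congr rfl
      intro k _
      rw [Function.update_self]
    have hbv : ∀ v, ∑ j, ∑ k, γv v (j, k) *
        hamming (Function.update σ v j) (Function.update τ v k) ≤
        (if v = u then 0 else 1 + (if G.Adj v u then Real.tanh b else 0)) := by
      intro v
      by_cases hvu : v = u
      · subst hvu
        rw [if_pos rfl]
        have hh : ∀ j k : Fin q, γv v (j, k) *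
            hamming (Function.update σ v j) (Function.update τ v k) =
            if j = k then 0 else γv v (j, k) := by
          intro j k
          rw [hamming_update_self σ τ v hστ j k]
          by_cases hjk : j = k
          · rw [if_pos hjk, if_pos hjk, mul_zero]
          · rw [if_neg hjk, if_neg hjk, mul_one]
        rw [Finset.sum_congr rfl fun j (_ : j ∈ univ) =>
          Finset.sum_congr rfl fun k (_ : k ∈ univ) => hh j k]
        have := hoff v
        rw [if_neg (G.irrefl)] at this
        exact this
      · rw [if_neg hvu]
        have hh : ∀ j k : Fin q, γv v (j, k) *
            hamming (Function.update σ v j) (Function.update τ v k) =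
            γv v (j, k) + (if j = k then 0 else γv v (j, k)) := by
          intro j k
          rw [hamming_update_ne σ τ u hστ hu v hvu j k]
          by_cases hjk : j = k
          · rw [if_pos hjk, if_pos hjk, mul_one, add_zero]
          · rw [if_neg hjk, if_neg hjk]; ring
        rw [Finset.sum_congr rfl fun j (_ : j ∈ univ) =>
          Finset.sum_congr rfl fun k (_ : k ∈ univ) => hh j k]
        rw [Finset.sum_congr rfl fun j (_ : j ∈ univ) =>
          Finset.sum_add_distrib, Finset.sum_add_distrib]
        have h1 : ∑ j, ∑ k, γv v (j, k) = 1 := by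
          rw [Finset.sum_congr rfl fun j (_ : j ∈ univ) => (hγvC v).2.1 j]
          exact hpσ1 v
        rw [h1]
        linarith [hoff v]
    calc ∑ p : (V → Fin q) × (V → Fin q),
          (N⁻¹ * ∑ v, I1 v p.1 * (I2 v p.2 * γv v (p.1 v, p.2 v))) * hamming p.1 p.2
        = ∑ σ' : V → Fin q, ∑ τ' : V → Fin q, N⁻¹ * ∑ v, f v σ' τ' := by
          rw [Fintype.sum_prod_type]
          exact Finset.sum_congr rfl fun σ' _ => Finset.sum_congr rfl fun τ' _ => e1 σ' τ'
      _ = N⁻¹ * ∑ σ' : V → Fin q, ∑ τ' : V → Fin q, ∑ v, f v σ' τ' := by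
          rw [Finset.mul_sum]
          apply Finset.sum_congr rfl
          intro σ' _
          rw [Finset.mul_sum]
      _ = N⁻¹ * ∑ v, ∑ σ' : V → Fin q, ∑ τ' : V → Fin q, f v σ' τ' := by
          congr 1
          rw [Finset.sum_congr rfl fun σ' (_ : σ' ∈ univ) =>
            (Finset.sum_comm : ∑ τ' : V → Fin q, ∑ v, f v σ' τ' = ∑ v, ∑ τ' : V → Fin q, f v σ' τ')]
          exact Finset.sum_comm
      _ ≤ N⁻¹ * ∑ v, (if v = u then 0 else 1 + (if G.Adj v u then Real.tanh b else 0)) := by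
          apply mul_le_mul_of_nonneg_left _ (by positivity)
          apply Finset.sum_le_sum
          intro v _
          rw [hSv v]
          exact hbv v
      _ ≤ 1 - (1 - (G.maxDegree : ℝ) * Real.tanh (β / Fintype.card V)) / Fintype.card V := by
          have hBsum : ∑ v, (if v = u then (0:ℝ) else 1 + (if G.Adj v u then Real.tanh b else 0))
              = (N - 1) + (G.degree u : ℝ) * Real.tanh b := by
            rw [← Finset.add_sum_erase _ _ (mem_univ u), if_pos rfl, zero_add]
            rw [Finset.sum_congr rfl fun v hv => if_neg (mem_erase.1 hv).1]
            rw [Finset.sum_add_distrib, Finset.sum_const, Finset.card_erase_of_mem (mem_univ u)]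
            have hext : ∑ v ∈ univ.erase u, (if G.Adj v u then Real.tanh b else 0)
                = ∑ v : V, (if G.Adj v u then Real.tanh b else 0) := by
              rw [← Finset.add_sum_erase _ _ (mem_univ u), if_neg G.irrefl, zero_add]
            rw [hext]
            have hdeg : ∑ v : V, (if G.Adj v u then Real.tanh b else 0)
                = (G.degree u : ℝ) * Real.tanh b := by
              rw [← Finset.sum_filter]
              rw [Finset.sum_const]
              have hfd : (univ.filter fun v => G.Adj v u) = G.neighborFinset u := by
                ext x
                simp [SimpleGraph.mem_neighborFinset, G.adj_comm]
              rw [hfd]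
              rw [nsmul_eq_mul]
              rfl
            rw [hdeg, nsmul_eq_mul, mul_one,
              Nat.cast_sub (Finset.card_pos.2 Finset.univ_nonempty),
              Finset.card_univ, hN]
            norm_num
          have hdegle : (G.degree u : ℝ) ≤ (G.maxDegree : ℝ) := by
            exact_mod_cast G.degree_le_maxDegree u
          have hstep : (N - 1) + (G.degree u : ℝ) * Real.tanh b ≤
              (N - 1) + (G.maxDegree : ℝ) * Real.tanh b :=
            by linarith [mul_le_mul_of_nonneg_right hdegle hTnn]
          have hfin : N⁻¹ * ((N - 1) + (G.maxDegree : ℝ) * Real.tanh b)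
              = 1 - (1 - (G.maxDegree : ℝ) * Real.tanh b) / N := by
            field_simp
            ring
          calc N⁻¹ * ∑ v, (if v = u then (0:ℝ) else 1 + (if G.Adj v u then Real.tanh b else 0))
              ≤ N⁻¹ * ((N - 1) + (G.maxDegree : ℝ) * Real.tanh b) := by
                rw [hBsum]
                exact mul_le_mul_of_nonneg_left hstep (by positivity)
            _ = 1 - (1 - (G.maxDegree : ℝ) * Real.tanh b) / N := hfin
            _ = 1 - (1 - (G.maxDegree : ℝ) * Real.tanh (β / Fintype.card V)) / Fintype.card V := by
                rw [hb, hN]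


lemma mainInd [Fintype V] [Nonempty V] {q : ℕ} (hq : 0 < q) (G : SimpleGraph V)
    (β : ℝ) (hβ : 0 ≤ β) :
    ∀ (n : ℕ) (σ τ : V → Fin q), (univ.filter fun v => σ v ≠ τ v).card = n →
    ∃ γ : (V → Fin q) × (V → Fin q) → ℝ,
      IsCoupling γ (glauber (pottsGibbs q G β) σ) (glauber (pottsGibbs q G β) τ) ∧
      ∑ p : (V → Fin q) × (V → Fin q), γ p * hamming p.1 p.2 ≤
        (1 - (1 - (G.maxDegree : ℝ) * Real.tanh (β / Fintype.card V)) /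
          Fintype.card V) * n := by
  intro n
  induction n with
  | zero =>
    intro σ τ h
    have hστ : σ = τ := by
      funext x
      by_contra hx
      have hmem : x ∈ univ.filter (fun v => σ v ≠ τ v) := mem_filter.2 ⟨mem_univ x, hx⟩
      rw [Finset.card_eq_zero] at h
      rw [h] at hmem
      exact absurd hmem (Finset.notMem_empty x)
    subst hστ
    refine ⟨fun pr => if pr.1 = pr.2 then glauber (pottsGibbs q G β) σ pr.1 else 0,
      ⟨?_, ?_, ?_⟩, ?_⟩
    · intro pr
      dsimp only
      split_ifs
      · exact glauber_potts_nonneg hq G β σ _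
      · exact le_rfl
    · intro a; simp
    · intro bb; simp
    · have hz : ∀ pr : (V → Fin q) × (V → Fin q),
          (if pr.1 = pr.2 then glauber (pottsGibbs q G β) σ pr.1 else 0) *
            hamming pr.1 pr.2 = 0 := by
        intro pr
        by_cases h2 : pr.1 = pr.2
        · rw [if_pos h2]
          have : hamming pr.1 pr.2 = 0 := by
            unfold hamming
            rw [h2]
            simp
          rw [this, mul_zero]
        · rw [if_neg h2, zero_mul]
      rw [Finset.sum_congr rfl fun pr _ => hz pr, Finset.sum_const_zero]
      norm_num
  | succ n ih =>
    intro σ τ h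
    have hne : (univ.filter fun v => σ v ≠ τ v).Nonempty := by
      rw [← Finset.card_pos, h]; omega
    obtain ⟨u, hu⟩ := hne
    have huσ : σ u ≠ τ u := (mem_filter.1 hu).2
    set ρ := Function.update σ u (τ u) with hρ
    have hσρ : ∀ w, w ≠ u → σ w = ρ w := fun w hw =>
      (Function.update_of_ne hw _ σ).symm
    have hσρu : σ u ≠ ρ u := by
      rw [hρ, Function.update_self]; exact huσ
    obtain ⟨γ₁, hγ₁C, hγ₁B⟩ := oneStep hq G β hβ σ ρ u hσρ hσρu
    have hcard : (univ.filter fun v => ρ v ≠ τ v).card = n := by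
      have hset : (univ.filter fun v => ρ v ≠ τ v) =
          (univ.filter fun v => σ v ≠ τ v).erase u := by
        ext x
        rw [Finset.mem_erase, mem_filter, mem_filter]
        by_cases hx : x = u
        · subst hx
          rw [hρ]
          simp [Function.update_self]
        · rw [hρ, Function.update_of_ne hx]
          simp [hx]
      rw [hset, Finset.card_erase_of_mem hu, h]
      omega
    obtain ⟨γ₂, hγ₂C, hγ₂B⟩ := ih ρ τ hcard
    obtain ⟨γ, hγC, hγB⟩ := compCoupling (fun a bb => hamming a bb) hamming_triangle
      _ _ _ γ₁ γ₂ hγ₁C hγ₂C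
    refine ⟨γ, hγC, le_trans hγB ?_⟩
    push_cast
    nlinarith [hγ₁B, hγ₂B]

theorem stmt6 [Fintype V] [Nonempty V] (G : SimpleGraph V) (q : ℕ) (hq : 3 ≤ q)
    (β : ℝ) (hβ : 0 ≤ β)
    (hc : (G.maxDegree : ℝ) * Real.tanh (β / Fintype.card V) < 1)
    (σ τ : V → Fin q) :
    ∃ γ : (V → Fin q) × (V → Fin q) → ℝ,
      IsCoupling γ (glauber (pottsGibbs q G β) σ) (glauber (pottsGibbs q G β) τ) ∧
      ∑ p : (V → Fin q) × (V → Fin q), γ p * hamming p.1 p.2 ≤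
        (1 - (1 - (G.maxDegree : ℝ) * Real.tanh (β / Fintype.card V)) /
            Fintype.card V) * hamming σ τ := by
  have hq0 : 0 < q := by omega
  obtain ⟨γ, hC, hB⟩ := mainInd hq0 G β hβ
    ((univ.filter fun v => σ v ≠ τ v).card) σ τ rfl
  exact ⟨γ, hC, hB⟩
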